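/- Let g be a finite dimensional Lie algebra of dimension n over a field k, and h ⊆ g an ideal of dimension m such that the quotient g/h acts trivially on ⋀^{n-m}(g/h) (e.g. when h = [g,g]). Then ⋀^m h and ⋀^n g are isomorphic as one-dimensional representations of g (under the adjoint action). -/

import Mathlib

open ExteriorAlgebra

section AuxExterior

variable {k : Type*} [Field k] {M : Type*} [AddCommGroup M] [Module k M] {r : ℕ}

lemma aux_ιMulti_update (e : Fin r → M) (p : Fin r) (c : Fin r → k) :
    ιMulti k r (Function.update e p (∑ q, c q • e q)) = c p • ιMulti k r e := by
  classical
  have h1 : ιMulti k r (Function.update e p (∑ q, c q • e q))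
      = ∑ q, c q • ιMulti k r (Function.update e p (e q)) := by
    rw [← AlternatingMap.coe_multilinearMap, MultilinearMap.map_update_sum]
    exact Finset.sum_congr rfl fun q _ => by
      rw [AlternatingMap.coe_multilinearMap, AlternatingMap.map_update_smul]
  rw [h1, Finset.sum_eq_single p]
  · rw [Function.update_eq_self]
  · intro q _ hq
    rw [(ιMulti k r).map_eq_zero_of_eq (Function.update e p (e q)) (i := p) (j := q)
      (by simp [Function.update_of_ne hq]) (Ne.symm hq), smul_zero]
  · intro hp; exact absurd (Finset.mem_univ p) hp

lemma aux_ιMulti_sum_update (b : Module.Basis (Fin r) k M) (v : Fin r → M) :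
    ∑ p, ιMulti k r (Function.update (⇑b) p (v p))
      = (∑ p, b.repr (v p) p) • ιMulti k r ⇑b := by
  rw [Finset.sum_smul]
  refine Finset.sum_congr rfl fun p _ => ?_
  rw [← aux_ιMulti_update (⇑b) p (fun q => b.repr (v p) q)]
  congr 1
  rw [b.sum_repr (v p)]

lemma aux_ιMulti_basis_ne_zero (b : Module.Basis (Fin r) k M) : ιMulti k r ⇑b ≠ 0 := by
  classical
  intro hcon
  have := congrArg (liftAlternating (R := k) (M := M) (N := k)
    (fun i => if h : i = r then b.det.domDomCongr (finCongr h.symm) else 0)) hcon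
  rw [liftAlternating_apply_ιMulti, map_zero, dif_pos rfl] at this
  simp only [AlternatingMap.domDomCongr_apply] at this
  have hb : (⇑b ∘ ⇑(finCongr (rfl : r = r))) = ⇑b := by ext i; simp
  rw [hb, b.det_self] at this
  exact one_ne_zero this

lemma aux_ιMulti_eq_det_smul (b : Module.Basis (Fin r) k M) (y : Fin r → M) :
    ιMulti k r y = b.det y • ιMulti k r ⇑b := by
  classical
  have key : (ιMulti k r (M := M)) = b.det.smulRight (ιMulti k r ⇑b) := by
    refine Module.Basis.ext_alternating b fun v hv => ?_
    have hbij : Function.Bijective v := Finite.injective_iff_bijective.1 hv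
    let σ : Equiv.Perm (Fin r) := Equiv.ofBijective v hbij
    have hv' : (fun i => b (v i)) = ⇑b ∘ σ := rfl
    rw [hv', AlternatingMap.smulRight_apply, AlternatingMap.map_perm,
      AlternatingMap.map_perm, b.det_self]
    simp
  conv_lhs => rw [key]
  rw [AlternatingMap.smulRight_apply]

end AuxExterior

/-- The `n`-fold wedge as an element of the `n`-th exterior power. -/
def expWedge (k : Type*) [Field k] {M : Type*} [AddCommGroup M] [Module k M]
    (n : ℕ) (y : Fin n → M) : ⋀[k]^n M :=
  ⟨ExteriorAlgebra.ιMulti k n y, ExteriorAlgebra.ιMulti_range k n (Set.mem_range_self y)⟩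

section AuxWedge

variable {k : Type*} [Field k] {M : Type*} [AddCommGroup M] [Module k M] {r : ℕ}

lemma expWedge_coe (y : Fin r → M) :
    ((expWedge k r y : ⋀[k]^r M) : ExteriorAlgebra k M) = ιMulti k r y := rfl

lemma expWedge_exists_smul (b : Module.Basis (Fin r) k M) (w : ⋀[k]^r M) :
    ∃ c : k, w = c • expWedge k r ⇑b := by
  have hw : (w : ExteriorAlgebra k M) ∈ Submodule.span k (Set.range (ιMulti k r (M := M))) := by
    rw [ιMulti_span_fixedDegree]; exact w.2
  have hle : Submodule.span k (Set.range (ιMulti k r (M := M))) ≤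
      Submodule.span k {ιMulti k r ⇑b} := by
    rw [Submodule.span_le]
    rintro _ ⟨y, rfl⟩
    rw [SetLike.mem_coe, Submodule.mem_span_singleton]
    exact ⟨b.det y, (aux_ιMulti_eq_det_smul b y).symm⟩
  obtain ⟨c, hc⟩ := Submodule.mem_span_singleton.1 (hle hw)
  exact ⟨c, Subtype.ext hc.symm⟩

lemma expWedge_ne_zero (b : Module.Basis (Fin r) k M) : expWedge k r ⇑b ≠ 0 :=
  fun hcon => aux_ιMulti_basis_ne_zero b (congrArg Subtype.val hcon)

/-- The basis of the top exterior power given by the wedge of a basis. -/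
noncomputable def wedgeBasis (b : Module.Basis (Fin r) k M) : Module.Basis Unit k (⋀[k]^r M) :=
  Module.Basis.mk (v := fun _ : Unit => expWedge k r ⇑b)
    (linearIndependent_unique_iff.2 (expWedge_ne_zero b))
    (by
      intro w _
      obtain ⟨c, hc⟩ := expWedge_exists_smul b w
      rw [hc]
      exact Submodule.smul_mem _ _ (Submodule.subset_span ⟨(), rfl⟩))

lemma wedgeBasis_apply (b : Module.Basis (Fin r) k M) (u : Unit) :
    wedgeBasis b u = expWedge k r ⇑b := by
  rw [wedgeBasis, Module.Basis.coe_mk]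

lemma expWedge_sum_update (b : Module.Basis (Fin r) k M) (v : Fin r → M) :
    ∑ p, expWedge k r (Function.update (⇑b) p (v p))
      = (∑ p, b.repr (v p) p) • expWedge k r ⇑b := by
  apply Subtype.ext
  rw [AddSubmonoidClass.coe_finset_sum, SetLike.val_smul]
  exact aux_ιMulti_sum_update b v

end AuxWedge

/-- Let `g` be an `n`-dimensional Lie algebra over a field `k` and `h ⊆ g` an `m`-dimensional
ideal such that the induced adjoint action of `g` on `⋀^{n-m}(g/h)` is trivial (e.g. when
`h = [g,g]`).  Then `⋀^m h` and `⋀^n g` are isomorphic as one-dimensional representations of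
`g` under the adjoint action (extended by derivations to exterior powers). -/
theorem exterior_power_ideal_iso_top_exterior_power
    (k : Type*) [Field k] (g : Type*) [LieRing g] [LieAlgebra k g]
    [FiniteDimensional k g] (h : LieIdeal k g) (n m : ℕ)
    (hn : Module.finrank k g = n) (hm : Module.finrank k h = m) (hmn : m ≤ n)
    -- the adjoint action of `g` on `⋀^m h`
    (ρh : g →ₗ[k] Module.End k (⋀[k]^m h))
    (hρh : ∀ (x : g) (y : Fin m → h),
      ρh x (expWedge k m y) =
        ∑ p : Fin m, expWedge k m
          (Function.update y p ⟨⁅x, (y p : g)⁆, h.lie_mem (y p).2⟩))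
    -- the adjoint action of `g` on `⋀^n g`
    (ρg : g →ₗ[k] Module.End k (⋀[k]^n g))
    (hρg : ∀ (x : g) (y : Fin n → g),
      ρg x (expWedge k n y) = ∑ p : Fin n, expWedge k n (Function.update y p ⁅x, y p⁆))
    -- the induced adjoint action of `g` on `⋀^{n-m}(g/h)`, assumed trivial
    (τ : g →ₗ[k] Module.End k (⋀[k]^(n - m) (g ⧸ h)))
    (hτ : ∀ (x : g) (y : Fin (n - m) → g ⧸ h),
      τ x (expWedge k (n - m) y) =
        ∑ p : Fin (n - m), expWedge k (n - m) (Function.update y p ⁅x, y p⁆))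
    (hτtriv : τ = 0) :
    ∃ e : (⋀[k]^m h) ≃ₗ[k] (⋀[k]^n g),
      ∀ (x : g) (ω : ⋀[k]^m h), e (ρh x ω) = ρg x (e ω) := by
  classical
  -- the quotient map and the inclusion, as plain linear maps
  let π : g →ₗ[k] g ⧸ h := (LieSubmodule.Quotient.mk' h).toLinearMap
  let ιh : (↥h) →ₗ[k] g := LinearMap.mk ⟨Subtype.val, fun _ _ => rfl⟩ (fun _ _ => rfl)
  have hπsurj : Function.Surjective π := LieSubmodule.Quotient.surjective_mk' h
  have hπ0 : ∀ a : ↥h, π (ιh a) = 0 := fun a => by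
    show LieSubmodule.Quotient.mk (N := h) (a : g) = 0
    rw [LieSubmodule.Quotient.mk_eq_zero']
    exact a.2
  have hπlie : ∀ (x z : g), π ⁅x, z⁆ = ⁅x, π z⁆ := fun x z =>
    (LieSubmodule.Quotient.mk' h).map_lie x z
  -- a linear section of the quotient map
  obtain ⟨s, hs⟩ := π.exists_rightInverse_of_surjective (LinearMap.range_eq_top.2 hπsurj)
  have hs' : ∀ y : g ⧸ h, π (s y) = y := fun y => by
    have := LinearMap.congr_fun hs y
    simpa using this
  -- the splitting `h × (g ⧸ h) ≃ g`
  let φ : ((↥h) × (g ⧸ h)) →ₗ[k] g := LinearMap.coprod ιh s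
  have hφapp : ∀ (a : ↥h) (b : g ⧸ h), φ (a, b) = (a : g) + s b := fun a b => rfl
  have hφbij : Function.Bijective φ := by
    constructor
    · rw [← LinearMap.ker_eq_bot, LinearMap.ker_eq_bot']
      rintro ⟨a, b⟩ hab
      rw [hφapp] at hab
      have hb : b = 0 := by
        have h2 := congrArg π hab
        rw [map_add, map_zero, hs' b] at h2
        rw [show π (a : g) = 0 from hπ0 a, zero_add] at h2
        exact h2
      subst hb
      rw [map_zero, add_zero] at hab
      rw [show a = 0 from Subtype.ext hab]
      simp
    · intro z
      have hmem : z - s (π z) ∈ h := by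
        rw [← LieSubmodule.Quotient.mk_eq_zero']
        show π (z - s (π z)) = 0
        rw [map_sub, hs' (π z), sub_self]
      refine ⟨(⟨z - s (π z), hmem⟩, π z), ?_⟩
      rw [hφapp]
      exact sub_add_cancel z (s (π z))
  let φe : ((↥h) × (g ⧸ h)) ≃ₗ[k] g := LinearEquiv.ofBijective φ hφbij
  have hφe : ∀ (a : ↥h) (b : g ⧸ h), φe (a, b) = (a : g) + s b := fun a b => rfl
  -- bases
  have hq : Module.finrank k (g ⧸ h) = n - m := by
    have h1 := Submodule.finrank_quotient_add_finrank (h.toSubmodule : Submodule k g)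
    have hm' : Module.finrank k h.toSubmodule = m := hm
    have h2 : Module.finrank k (g ⧸ (h.toSubmodule : Submodule k g))
        = Module.finrank k (g ⧸ h) := rfl
    omega
  let bh : Module.Basis (Fin m) k (↥h) := Module.finBasisOfFinrankEq k (↥h) hm
  let bq : Module.Basis (Fin (n - m)) k (g ⧸ h) := Module.finBasisOfFinrankEq k (g ⧸ h) hq
  let bg0 : Module.Basis ((Fin m) ⊕ (Fin (n - m))) k g := (bh.prod bq).map φe
  let ee : ((Fin m) ⊕ (Fin (n - m))) ≃ Fin n := finSumFinEquiv.trans (finCongr (by omega))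
  let bg : Module.Basis (Fin n) k g := bg0.reindex ee
  -- the traces
  let Th : g → k := fun x => ∑ p, bh.repr ⟨⁅x, (bh p : g)⁆, h.lie_mem (bh p).2⟩ p
  let Tg : g → k := fun x => ∑ p, bg.repr ⁅x, bg p⁆ p
  let Tq : g → k := fun x => ∑ p, bq.repr ⁅x, bq p⁆ p
  -- the actions on the top wedges are given by the traces
  have hρh' : ∀ x : g, ρh x (expWedge k m ⇑bh) = Th x • expWedge k m ⇑bh := by
    intro x
    rw [hρh x ⇑bh]
    exact expWedge_sum_update bh (fun p => ⟨⁅x, (bh p : g)⁆, h.lie_mem (bh p).2⟩)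
  have hρg' : ∀ x : g, ρg x (expWedge k n ⇑bg) = Tg x • expWedge k n ⇑bg := by
    intro x
    rw [hρg x ⇑bg]
    exact expWedge_sum_update bg (fun p => ⁅x, bg p⁆)
  have hTq0 : ∀ x : g, Tq x = 0 := by
    intro x
    have h1 : τ x (expWedge k (n - m) ⇑bq) = Tq x • expWedge k (n - m) ⇑bq := by
      rw [hτ x ⇑bq]
      exact expWedge_sum_update bq (fun p => ⁅x, bq p⁆)
    rw [hτtriv] at h1
    simp only [LinearMap.zero_apply] at h1
    by_contra hc
    refine expWedge_ne_zero bq ?_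
    rw [← one_smul k (expWedge k (n - m) ⇑bq), ← inv_mul_cancel₀ hc, ← smul_smul, ← h1,
      smul_zero]
  -- the key trace identity
  have hkey : ∀ x : g, Tg x = Th x + Tq x := by
    intro x
    have hsum : Tg x = ∑ z : (Fin m) ⊕ (Fin (n - m)), bg0.repr ⁅x, bg0 z⁆ z := by
      show ∑ p, bg.repr ⁅x, bg p⁆ p = _
      rw [← Equiv.sum_comp ee (fun p => bg.repr ⁅x, bg p⁆ p)]
      refine Finset.sum_congr rfl fun z _ => ?_
      have h1 : bg (ee z) = bg0 z := by
        rw [Module.Basis.reindex_apply, Equiv.symm_apply_apply]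
      rw [h1, Module.Basis.repr_reindex_apply, Equiv.symm_apply_apply]
    rw [hsum, Fintype.sum_sum_type]
    congr 1
    · refine Finset.sum_congr rfl fun i _ => ?_
      have h1 : bg0 (Sum.inl i) = (bh i : g) := by
        show φe ((bh.prod bq) (Sum.inl i)) = _
        have h2 : (bh.prod bq) (Sum.inl i) = (bh i, 0) := by
          rw [Module.Basis.prod_apply]; simp
        rw [h2, hφe, map_zero, add_zero]
      have h2 : ∀ (w : g) (hw : w ∈ h), bg0.repr w (Sum.inl i) = bh.repr ⟨w, hw⟩ i := by
        intro w hw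
        have hsymm : φe.symm w = (⟨w, hw⟩, 0) := by
          rw [LinearEquiv.symm_apply_eq, hφe, map_zero, add_zero]
        calc bg0.repr w (Sum.inl i) = (bh.prod bq).repr (φe.symm w) (Sum.inl i) := rfl
          _ = bh.repr (φe.symm w).1 i := Module.Basis.prod_repr_inl _ _ _ _
          _ = bh.repr ⟨w, hw⟩ i := by rw [hsymm]
      rw [h1, h2 _ (h.lie_mem (bh i).2)]
    · refine Finset.sum_congr rfl fun j _ => ?_
      have h1 : bg0 (Sum.inr j) = s (bq j) := by
        show φe ((bh.prod bq) (Sum.inr j)) = _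
        have h2 : (bh.prod bq) (Sum.inr j) = (0, bq j) := by
          rw [Module.Basis.prod_apply]; simp
        rw [h2, hφe]
        show ((0 : ↥h) : g) + s (bq j) = s (bq j)
        rw [ZeroMemClass.coe_zero, zero_add]
      have h2 : ∀ w : g, bg0.repr w (Sum.inr j) = bq.repr (π w) j := by
        intro w
        have hmem : w - s (π w) ∈ h := by
          rw [← LieSubmodule.Quotient.mk_eq_zero']
          show π (w - s (π w)) = 0
          rw [map_sub, hs' (π w), sub_self]
        have hsymm : φe.symm w = (⟨w - s (π w), hmem⟩, π w) := by
          rw [LinearEquiv.symm_apply_eq, hφe]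
          exact (sub_add_cancel w (s (π w))).symm
        calc bg0.repr w (Sum.inr j) = (bh.prod bq).repr (φe.symm w) (Sum.inr j) := rfl
          _ = bq.repr (φe.symm w).2 j := Module.Basis.prod_repr_inr _ _ _ _
          _ = bq.repr (π w) j := by rw [hsymm]
      rw [h1, h2]
      have h3 : π ⁅x, s (bq j)⁆ = ⁅x, bq j⁆ := by
        rw [hπlie, hs' (bq j)]
      rw [h3]
  -- the linear equivalence
  let Bh : Module.Basis Unit k (⋀[k]^m (↥h)) := wedgeBasis bh
  let Bg : Module.Basis Unit k (⋀[k]^n g) := wedgeBasis bg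
  let e : (⋀[k]^m (↥h)) ≃ₗ[k] (⋀[k]^n g) := Bh.equiv Bg (Equiv.refl Unit)
  have he : e (expWedge k m ⇑bh) = expWedge k n ⇑bg := by
    have h1 : expWedge k m ⇑bh = Bh () := (wedgeBasis_apply bh ()).symm
    rw [h1, Module.Basis.equiv_apply]
    exact wedgeBasis_apply bg ()
  refine ⟨e, fun x ω => ?_⟩
  obtain ⟨c, rfl⟩ := expWedge_exists_smul bh ω
  rw [(ρh x).map_smul c (expWedge k m ⇑bh), hρh' x, e.map_smul, e.map_smul, e.map_smul, he,
    (ρg x).map_smul c (expWedge k n ⇑bg), hρg' x, hkey x, hTq0 x, add_zero]
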